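/- Let m : ℝ → ℝ be measurable and bounded below by −K with K ≥ 0, let f⁰ ∈ M₊(ℝ), and let f be the weak solution of the model with initial datum f⁰. If for some k ∈ ℕ one has ∫_ℝ |x|ᵏ f⁰(dx) < ∞, then for all t ≥ 0: ∫_ℝ |x|ᵏ f(t,dx) ≤ e^{(K+1)t} ∫_ℝ |x|ᵏ f⁰(dx). -/

import Mathlib

open MeasureTheory Set Filter

/-- The trait-mixing (reproduction) operator `B₀`: the pushforward of `(1/ρ)·(ν ⊗ ν)`
under `(z₁, z₂) ↦ (z₁ + z₂)/2`, where `ρ = ν(ℝ)`, and `0` if `ν` is not finite. -/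
noncomputable def B0 (ν : Measure ℝ) : Measure ℝ := by
  classical
  exact if h : IsFiniteMeasure ν then
    haveI := h
    Measure.map (fun p : ℝ × ℝ => (p.1 + p.2) / 2) ((ν Set.univ)⁻¹ • ν.prod ν)
  else 0

/-- Total variation distance between two finite measures, via duality with
measurable functions bounded by `1`. -/
noncomputable def tvDist (μ ν : Measure ℝ) : ℝ :=
  ⨆ h : {h : ℝ → ℝ // Measurable h ∧ ∀ x, |h x| ≤ 1},
    |(∫ x, h.1 x ∂μ) - ∫ x, h.1 x ∂ν|

/-- `f` is a weak (measure) solution of `∂ₜ f = B₀[f] − m f` on `[0, T]`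
with initial datum `f0`: it takes values in finite nonnegative measures, is
continuous in time for the total variation norm, and satisfies the Duhamel
formula on every Borel set. -/
def IsWeakSolution (m : ℝ → ℝ) (f0 : Measure ℝ) (T : ℝ) (f : ℝ → Measure ℝ) : Prop :=
  (∀ t ∈ Set.Icc 0 T, IsFiniteMeasure (f t)) ∧
  (∀ t ∈ Set.Icc 0 T,
    Filter.Tendsto (fun s => tvDist (f s) (f t)) (nhdsWithin t (Set.Icc 0 T)) (nhds 0)) ∧
  (∀ A : Set ℝ, MeasurableSet A → ∀ t ∈ Set.Icc 0 T,
    f t A = (∫⁻ x in A, ENNReal.ofReal (Real.exp (-(m x) * t)) ∂f0)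
      + ∫⁻ s in Set.Icc 0 t,
          ∫⁻ x in A, ENNReal.ofReal (Real.exp (-(m x) * (t - s))) ∂(B0 (f s)))

/-- A weak solution on `[0, T]` for every `T > 0`, i.e. on `[0, ∞)`. -/
def IsWeakSolutionGlobal (m : ℝ → ℝ) (f0 : Measure ℝ) (f : ℝ → Measure ℝ) : Prop :=
  ∀ T > 0, IsWeakSolution m f0 T f

/-! ### Auxiliary lemmas -/

open ENNReal Real ProbabilityTheory
open scoped Nat

section Aux

lemma MP.inv_mul_le_one' (a : ℝ≥0∞) : a⁻¹ * a ≤ 1 := by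
  rcases eq_or_ne a 0 with rfl | h0
  · simp
  rcases eq_or_ne a ⊤ with rfl | ht
  · simp
  · rw [ENNReal.inv_mul_cancel h0 ht]

lemma MP.pt_conv (k : ℕ) (a b : ℝ) : |(a+b)/2|^k ≤ (|a|^k + |b|^k)/2 := by
  have h1 : |(a+b)/2| ≤ (|a|+|b|)/2 := by
    rw [abs_div, abs_two]
    exact div_le_div_of_nonneg_right (abs_add_le a b) (by norm_num)
  have h2 := (convexOn_pow k).2 (mem_Ici.2 (abs_nonneg a)) (mem_Ici.2 (abs_nonneg b))
      (by norm_num : (0:ℝ) ≤ 1/2) (by norm_num : (0:ℝ) ≤ 1/2) (by norm_num)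
  simp only [smul_eq_mul] at h2
  calc |(a+b)/2|^k ≤ ((|a|+|b|)/2)^k :=
        pow_le_pow_left₀ (abs_nonneg _) h1 k
    _ = (1/2*|a| + 1/2*|b|)^k := by ring_nf
    _ ≤ 1/2*|a|^k + 1/2*|b|^k := h2
    _ = (|a|^k+|b|^k)/2 := by ring

lemma MP.pt_trunc (k : ℕ) (R a b : ℝ) (hR : 0 ≤ R) :
    min |(a+b)/2| R ^ k ≤ min |a| R ^ k + min |b| R ^ k := by
  have h1 : min |(a+b)/2| R ≤ max (min |a| R) (min |b| R) := by
    rcases le_total |a| |b| with h | h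
    · have : |(a+b)/2| ≤ |b| := by
        rw [abs_div, abs_two]
        have := abs_add_le a b
        linarith
      exact le_max_of_le_right (le_min (min_le_of_left_le this) (min_le_right _ _))
    · have : |(a+b)/2| ≤ |a| := by
        rw [abs_div, abs_two]
        have := abs_add_le a b
        linarith
      exact le_max_of_le_left (le_min (min_le_of_left_le this) (min_le_right _ _))
  have h0 : 0 ≤ min |(a+b)/2| R := le_min (abs_nonneg _) hR
  calc min |(a+b)/2| R ^ k ≤ max (min |a| R) (min |b| R) ^ k :=
        pow_le_pow_left₀ h0 h1 k
    _ ≤ min |a| R ^ k + min |b| R ^ k := by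
        rcases le_total (min |a| R) (min |b| R) with h | h
        · rw [max_eq_right h]
          exact le_add_of_nonneg_left (pow_nonneg (le_min (abs_nonneg _) hR) k)
        · rw [max_eq_left h]
          exact le_add_of_nonneg_right (pow_nonneg (le_min (abs_nonneg _) hR) k)

lemma MP.B0_eq (ν : Measure ℝ) [h : IsFiniteMeasure ν] :
    B0 ν = Measure.map (fun p : ℝ × ℝ => (p.1 + p.2) / 2) ((ν Set.univ)⁻¹ • ν.prod ν) := by
  rw [B0, dif_pos h]

lemma MP.measurable_half : Measurable (fun p : ℝ × ℝ => (p.1 + p.2) / 2) :=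
  (measurable_fst.add measurable_snd).div_const 2

lemma MP.B0_lintegral_le (ν : Measure ℝ) [IsFiniteMeasure ν] (h : ℝ → ℝ≥0∞) (hh : Measurable h)
    (C : ℝ≥0∞) (hpt : ∀ a b : ℝ, h ((a + b) / 2) ≤ C * (h a + h b)) :
    ∫⁻ x, h x ∂(B0 ν) ≤ 2 * C * ∫⁻ x, h x ∂ν := by
  rw [MP.B0_eq, lintegral_map hh MP.measurable_half, lintegral_smul_measure]
  have key : ∫⁻ p : ℝ × ℝ, h ((p.1 + p.2) / 2) ∂(ν.prod ν)
      ≤ C * (2 * ((ν Set.univ) * ∫⁻ x, h x ∂ν)) := by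
    calc ∫⁻ p : ℝ × ℝ, h ((p.1 + p.2) / 2) ∂(ν.prod ν)
        ≤ ∫⁻ p : ℝ × ℝ, C * (h p.1 + h p.2) ∂(ν.prod ν) :=
          lintegral_mono fun p => hpt p.1 p.2
      _ = C * ∫⁻ p : ℝ × ℝ, (h p.1 + h p.2) ∂(ν.prod ν) :=
          lintegral_const_mul C ((hh.comp measurable_fst).add (hh.comp measurable_snd))
      _ = C * ((∫⁻ p : ℝ × ℝ, h p.1 ∂(ν.prod ν)) + ∫⁻ p : ℝ × ℝ, h p.2 ∂(ν.prod ν)) := by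
          rw [lintegral_add_left (μ := ν.prod ν) (f := fun p : ℝ × ℝ => h p.1)
            (by exact hh.comp measurable_fst)]
      _ = C * (2 * ((ν Set.univ) * ∫⁻ x, h x ∂ν)) := by
          rw [MeasureTheory.lintegral_prod (f := fun p : ℝ × ℝ => h p.1)
              (by exact (hh.comp measurable_fst).aemeasurable),
            MeasureTheory.lintegral_prod (f := fun p : ℝ × ℝ => h p.2)
              (by exact (hh.comp measurable_snd).aemeasurable)]
          simp only [lintegral_const]
          rw [lintegral_mul_const _ hh]
          ring
  calc (ν Set.univ)⁻¹ * ∫⁻ p : ℝ × ℝ, h ((p.1 + p.2) / 2) ∂(ν.prod ν)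
      ≤ (ν Set.univ)⁻¹ * (C * (2 * ((ν Set.univ) * ∫⁻ x, h x ∂ν))) :=
        mul_le_mul_right key _
    _ = ((ν Set.univ)⁻¹ * (ν Set.univ)) * (2 * C * ∫⁻ x, h x ∂ν) := by ring
    _ ≤ 1 * (2 * C * ∫⁻ x, h x ∂ν) := mul_le_mul_left (MP.inv_mul_le_one' _) _
    _ = 2 * C * ∫⁻ x, h x ∂ν := one_mul _

lemma MP.B0_mass (ν : Measure ℝ) [IsFiniteMeasure ν] : B0 ν Set.univ ≤ ν Set.univ := by
  have := MP.B0_lintegral_le ν (fun _ => 1) measurable_const 2⁻¹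
    (fun a b => by show (1:ℝ≥0∞) ≤ 2⁻¹ * (1 + 1); rw [one_add_one_eq_two, ENNReal.inv_mul_cancel two_ne_zero ofNat_ne_top])
  simp only [lintegral_one] at this
  calc B0 ν Set.univ ≤ 2 * 2⁻¹ * ν Set.univ := this
    _ = ν Set.univ := by rw [ENNReal.mul_inv_cancel two_ne_zero ofNat_ne_top, one_mul]

lemma MP.lint_Icc_eq (g G : ℝ → ℝ) (t : ℝ) (ht : 0 ≤ t) (hg : Continuous g)
    (hpos : ∀ s ∈ Icc (0:ℝ) t, 0 ≤ g s) (hd : ∀ s, HasDerivAt G (g s) s) :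
    ∫⁻ s in Icc 0 t, ENNReal.ofReal (g s) = ENNReal.ofReal (G t - G 0) := by
  rw [← MeasureTheory.ofReal_integral_eq_lintegral_ofReal
      (hg.integrableOn_Icc) ((ae_restrict_iff' measurableSet_Icc).2 (ae_of_all _ hpos))]
  congr 1
  rw [MeasureTheory.integral_Icc_eq_integral_Ioc, ← intervalIntegral.integral_of_le ht]
  exact intervalIntegral.integral_eq_sub_of_hasDerivAt (fun x _ => hd x)
    (hg.intervalIntegrable 0 t)

lemma MP.lint_exp_Icc (L t : ℝ) (hL : 0 < L) (ht : 0 ≤ t) :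
    ∫⁻ s in Icc 0 t, ENNReal.ofReal (Real.exp (L * s))
      = ENNReal.ofReal ((Real.exp (L * t) - 1) / L) := by
  have := MP.lint_Icc_eq (fun s => Real.exp (L * s)) (fun s => Real.exp (L * s) / L) t ht
    (Real.continuous_exp.comp (continuous_const.mul continuous_id))
    (fun s _ => (Real.exp_pos _).le)
    (fun s => by
      have h1 : HasDerivAt (fun s : ℝ => L * s) L s := by
        simpa using (hasDerivAt_id s).const_mul L
      have h2 := h1.exp
      have h3 := h2.div_const L
      refine h3.congr_deriv ?_
      field_simp)
  rw [this]
  congr 1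
  simp only [mul_zero, Real.exp_zero]
  ring

lemma MP.lint_pow_Icc (L t : ℝ) (hL : 0 < L) (ht : 0 ≤ t) (n : ℕ) :
    ∫⁻ s in Icc 0 t, ENNReal.ofReal ((L * s) ^ n / n !)
      = ENNReal.ofReal ((L * t) ^ (n + 1) / ((n + 1)! * L)) := by
  have hfact : ((n:ℝ) + 1) * n ! ≠ 0 := by positivity
  have := MP.lint_Icc_eq (fun s => (L * s) ^ n / n !)
    (fun s => (L * s) ^ (n + 1) / (((n + 1)! : ℝ) * L)) t ht
    (by continuity)
    (fun s hs => div_nonneg (pow_nonneg (mul_nonneg hL.le hs.1) n) (by positivity))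
    (fun s => by
      have h1 : HasDerivAt (fun s : ℝ => L * s) L s := by
        simpa using (hasDerivAt_id s).const_mul L
      have h2 := (h1.fun_pow (n + 1)).div_const (((n + 1)! : ℝ) * L)
      refine h2.congr_deriv ?_
      have : ((n + 1)! : ℝ) = ((n:ℝ) + 1) * n ! := by
        rw [Nat.factorial_succ]; push_cast; ring
      rw [this]
      rw [Nat.add_sub_cancel]; push_cast
      field_simp)
  rw [this]
  congr 1
  simp [ht, hL.le, zero_pow]

lemma MP.gronwall_core (L T : ℝ) (hL : 0 < L) (hT : 0 ≤ T) (u : ℝ → ℝ≥0∞)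
    (hu : Measurable u) (B C : ℝ≥0∞) (hB : B ≠ ⊤) (hub : ∀ s ∈ Icc (0:ℝ) T, u s ≤ B)
    (hrec : ∀ t ∈ Icc (0:ℝ) T, u t ≤ C + ENNReal.ofReal L * ∫⁻ s in Icc 0 t, u s) :
    ∀ t ∈ Icc (0:ℝ) T, u t ≤ ENNReal.ofReal (Real.exp (L * t)) * C := by
  have claim : ∀ n : ℕ, ∀ t ∈ Icc (0:ℝ) T,
      u t ≤ ENNReal.ofReal (Real.exp (L * t)) * C + B * ENNReal.ofReal ((L * t) ^ n / n !) := by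
    intro n
    induction n with
    | zero =>
      intro t ht
      simp only [pow_zero, Nat.factorial_zero, Nat.cast_one, div_one, ofReal_one, mul_one]
      exact le_add_left (hub t ht)
    | succ n ih =>
      intro t ht
      have ht0 : 0 ≤ t := ht.1
      have hbound : ∀ s ∈ Icc (0:ℝ) t, u s ≤
          ENNReal.ofReal (Real.exp (L * s)) * C + B * ENNReal.ofReal ((L * s) ^ n / n !) :=
        fun s hs => ih s ⟨hs.1, hs.2.trans ht.2⟩
      have hmeas : Measurable fun s =>
          ENNReal.ofReal (Real.exp (L * s)) * C + B * ENNReal.ofReal ((L * s) ^ n / n !) := by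
        fun_prop
      calc u t ≤ C + ENNReal.ofReal L * ∫⁻ s in Icc 0 t, u s := hrec t ht
        _ ≤ C + ENNReal.ofReal L * ∫⁻ s in Icc 0 t,
              (ENNReal.ofReal (Real.exp (L * s)) * C + B * ENNReal.ofReal ((L * s) ^ n / n !)) := by
            exact add_le_add_right (mul_le_mul_right (setLIntegral_mono hmeas hbound) _) C
        _ = C + ENNReal.ofReal L * ((∫⁻ s in Icc 0 t, ENNReal.ofReal (Real.exp (L * s))) * C
              + B * ∫⁻ s in Icc 0 t, ENNReal.ofReal ((L * s) ^ n / n !)) := by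
            rw [lintegral_add_left (by fun_prop), lintegral_mul_const _ (by fun_prop),
              lintegral_const_mul _ (by fun_prop)]
        _ = C + ENNReal.ofReal L * (ENNReal.ofReal ((Real.exp (L * t) - 1) / L) * C
              + B * ENNReal.ofReal ((L * t) ^ (n + 1) / ((n + 1)! * L))) := by
            rw [MP.lint_exp_Icc L t hL ht0, MP.lint_pow_Icc L t hL ht0 n]
        _ = ENNReal.ofReal (Real.exp (L * t)) * C
              + B * ENNReal.ofReal ((L * t) ^ (n + 1) / (n + 1)!) := by
            rw [mul_add, ← mul_assoc, ← ENNReal.ofReal_mul hL.le,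
              mul_div_cancel₀ _ hL.ne']
            rw [mul_left_comm (ENNReal.ofReal L), ← ENNReal.ofReal_mul hL.le]
            have h1 : L * ((L * t) ^ (n + 1) / (((n + 1)! : ℝ) * L))
                = (L * t) ^ (n + 1) / ((n + 1)! : ℝ) := by
              field_simp
            rw [h1]
            have h2 : ENNReal.ofReal (Real.exp (L * t))
                = 1 + ENNReal.ofReal (Real.exp (L * t) - 1) := by
              rw [← ENNReal.ofReal_one, ← ENNReal.ofReal_add zero_le_one]
              · congr 1; ring
              · have : 1 ≤ Real.exp (L * t) := by
                  rw [← Real.exp_zero]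
                  exact Real.exp_le_exp.2 (by positivity)
                linarith
            rw [h2]
            ring
  intro t ht
  have hlim : Tendsto (fun n : ℕ => ENNReal.ofReal (Real.exp (L * t)) * C
      + B * ENNReal.ofReal ((L * t) ^ n / n !)) atTop
      (nhds (ENNReal.ofReal (Real.exp (L * t)) * C)) := by
    have h1 : Tendsto (fun n : ℕ => ((L * t) ^ n / n ! : ℝ)) atTop (nhds 0) :=
      FloorSemiring.tendsto_pow_div_factorial_atTop (L * t)
    have h2 : Tendsto (fun n : ℕ => ENNReal.ofReal ((L * t) ^ n / n !)) atTop (nhds 0) := by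
      rw [← ENNReal.ofReal_zero]
      exact (ENNReal.continuous_ofReal.tendsto 0).comp h1
    have h3 : Tendsto (fun n : ℕ => B * ENNReal.ofReal ((L * t) ^ n / n !)) atTop (nhds 0) := by
      have := ENNReal.Tendsto.const_mul h2 (Or.inr hB)
      simpa using this
    have := h3.const_add (ENNReal.ofReal (Real.exp (L * t)) * C)
    simpa using this
  exact ge_of_tendsto' hlim (fun n => claim n t ht)

lemma MP.gronwall_exp (K L T : ℝ) (hK : 0 ≤ K) (hL : 0 < L) (hT : 0 ≤ T) (u : ℝ → ℝ≥0∞)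
    (hu : Measurable u) (B C : ℝ≥0∞) (hB : B ≠ ⊤) (hub : ∀ s ∈ Icc (0:ℝ) T, u s ≤ B)
    (hrec : ∀ t ∈ Icc (0:ℝ) T, u t ≤ ENNReal.ofReal (Real.exp (K * t)) * C
      + ENNReal.ofReal L * ∫⁻ s in Icc 0 t, ENNReal.ofReal (Real.exp (K * (t - s))) * u s) :
    ∀ t ∈ Icc (0:ℝ) T, u t ≤ ENNReal.ofReal (Real.exp ((K + L) * t)) * C := by
  set v : ℝ → ℝ≥0∞ := fun s => ENNReal.ofReal (Real.exp (-K * s)) * u s with hv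
  have hvmeas : Measurable v := by fun_prop
  have hexp1 : ∀ s : ℝ,
      ENNReal.ofReal (Real.exp (K * s)) * ENNReal.ofReal (Real.exp (-K * s)) = 1 := by
    intro s
    rw [← ENNReal.ofReal_mul (Real.exp_pos _).le, ← Real.exp_add]
    norm_num
  have huv : ∀ s, u s = ENNReal.ofReal (Real.exp (K * s)) * v s := by
    intro s
    rw [hv]
    simp only
    rw [← mul_assoc, hexp1, one_mul]
  have hvub : ∀ s ∈ Icc (0:ℝ) T, v s ≤ B := by
    intro s hs
    calc v s ≤ 1 * u s := by
          apply mul_le_mul_left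
          rw [← ENNReal.ofReal_one]
          apply ENNReal.ofReal_le_ofReal
          rw [← Real.exp_zero]
          apply Real.exp_le_exp.2
          nlinarith [hs.1]
      _ = u s := one_mul _
      _ ≤ B := hub s hs
  have hvrec : ∀ t ∈ Icc (0:ℝ) T, v t ≤ C + ENNReal.ofReal L * ∫⁻ s in Icc 0 t, v s := by
    intro t ht
    have expand : ∀ s : ℝ, ENNReal.ofReal (Real.exp (-K * t)) *
        (ENNReal.ofReal (Real.exp (K * (t - s))) * u s) = v s := by
      intro s
      rw [← mul_assoc, ← ENNReal.ofReal_mul (Real.exp_pos _).le, ← Real.exp_add]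
      congr 3
      ring
    calc v t = ENNReal.ofReal (Real.exp (-K * t)) * u t := rfl
      _ ≤ ENNReal.ofReal (Real.exp (-K * t)) * (ENNReal.ofReal (Real.exp (K * t)) * C
          + ENNReal.ofReal L * ∫⁻ s in Icc 0 t, ENNReal.ofReal (Real.exp (K * (t - s))) * u s) :=
        mul_le_mul_right (hrec t ht) _
      _ = C + ENNReal.ofReal L * ∫⁻ s in Icc 0 t, v s := by
        rw [mul_add, ← mul_assoc, mul_comm (ENNReal.ofReal (Real.exp (-K * t))), hexp1, one_mul]
        congr 1
        rw [← mul_assoc, mul_comm (ENNReal.ofReal (Real.exp (-K * t))), mul_assoc,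
          ← lintegral_const_mul' _ _ ENNReal.ofReal_ne_top]
        congr 1
        exact lintegral_congr fun s => expand s
  intro t ht
  have := MP.gronwall_core L T hL hT v hvmeas B C hB hvub hvrec t ht
  calc u t = ENNReal.ofReal (Real.exp (K * t)) * v t := huv t
    _ ≤ ENNReal.ofReal (Real.exp (K * t)) * (ENNReal.ofReal (Real.exp (L * t)) * C) :=
      mul_le_mul_right this _
    _ = ENNReal.ofReal (Real.exp ((K + L) * t)) * C := by
      rw [← mul_assoc, ← ENNReal.ofReal_mul (Real.exp_pos _).le, ← Real.exp_add]
      congr 3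
      ring

lemma MP.integral_abs_le_mass (μ : Measure ℝ) [IsFiniteMeasure μ] (h : ℝ → ℝ)
    (hb : ∀ x, |h x| ≤ 1) : |∫ x, h x ∂μ| ≤ (μ Set.univ).toReal := by
  have := MeasureTheory.norm_integral_le_of_norm_le_const (μ := μ) (f := h) (C := 1)
    (ae_of_all _ fun x => by simpa using hb x)
  simpa [Measure.real] using this

lemma MP.tvDist_ge (μ ν : Measure ℝ) [IsFiniteMeasure μ] [IsFiniteMeasure ν]
    (h : ℝ → ℝ) (hh : Measurable h) (hb : ∀ x, |h x| ≤ 1) :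
    |(∫ x, h x ∂μ) - ∫ x, h x ∂ν| ≤ tvDist μ ν := by
  have hbdd : BddAbove (range fun h : {h : ℝ → ℝ // Measurable h ∧ ∀ x, |h x| ≤ 1} =>
      |(∫ x, h.1 x ∂μ) - ∫ x, h.1 x ∂ν|) := by
    refine ⟨(μ Set.univ).toReal + (ν Set.univ).toReal, ?_⟩
    rintro _ ⟨⟨g, hg, hgb⟩, rfl⟩
    calc |(∫ x, g x ∂μ) - ∫ x, g x ∂ν| ≤ |∫ x, g x ∂μ| + |∫ x, g x ∂ν| := abs_sub _ _
      _ ≤ (μ Set.univ).toReal + (ν Set.univ).toReal :=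
        add_le_add (MP.integral_abs_le_mass μ g hgb) (MP.integral_abs_le_mass ν g hgb)
  exact le_ciSup hbdd ⟨h, hh, hb⟩

lemma MP.cont_integral {T : ℝ} {f : ℝ → Measure ℝ}
    (hfin : ∀ t ∈ Icc (0:ℝ) T, IsFiniteMeasure (f t))
    (htv : ∀ t ∈ Icc (0:ℝ) T,
      Tendsto (fun s => tvDist (f s) (f t)) (nhdsWithin t (Icc 0 T)) (nhds 0))
    (h : ℝ → ℝ) (hh : Measurable h) (hb : ∀ x, |h x| ≤ 1) :
    ContinuousOn (fun s => ∫ x, h x ∂(f s)) (Icc 0 T) := by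
  intro t ht
  rw [ContinuousWithinAt, tendsto_iff_dist_tendsto_zero]
  apply squeeze_zero' (Eventually.of_forall fun s => dist_nonneg)
  · show ∀ᶠ s in nhdsWithin t (Icc 0 T),
      dist (∫ x, h x ∂(f s)) (∫ x, h x ∂(f t)) ≤ tvDist (f s) (f t)
    filter_upwards [self_mem_nhdsWithin] with s hs
    haveI := hfin s hs
    haveI := hfin t ht
    rw [Real.dist_eq]
    exact MP.tvDist_ge (f s) (f t) h hh hb
  · exact htv t ht

end Aux

/-- **Propagation of moments.** If `m ≥ −K` with `K ≥ 0` and the initial datum has a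
finite moment of order `k`, then the weak solution satisfies
`∫ |x|^k f(t,dx) ≤ e^{(K+1)t} ∫ |x|^k f⁰(dx)` for all `t ≥ 0`. -/
theorem moment_propagation (m : ℝ → ℝ) (hm : Measurable m)
    (K : ℝ) (hK : 0 ≤ K) (hbd : ∀ x, -K ≤ m x)
    (f0 : Measure ℝ) (hf0 : IsFiniteMeasure f0)
    (f : ℝ → Measure ℝ) (hf : IsWeakSolutionGlobal m f0 f)
    (k : ℕ) (hmom : (∫⁻ x, ENNReal.ofReal (|x| ^ k) ∂f0) < ⊤) :
    ∀ t : ℝ, 0 ≤ t →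
      (∫⁻ x, ENNReal.ofReal (|x| ^ k) ∂(f t))
        ≤ ENNReal.ofReal (Real.exp ((K + 1) * t)) * ∫⁻ x, ENNReal.ofReal (|x| ^ k) ∂f0 := by
  intro t0 ht0
  set T : ℝ := t0 + 1 with hT
  have hT1 : (0:ℝ) < T := by linarith
  obtain ⟨hfin, htv, hDuh⟩ := hf T hT1
  have ht0T : t0 ∈ Icc (0:ℝ) T := ⟨ht0, by linarith⟩
  -- clamping
  set c : ℝ → ℝ := fun s => max 0 (min s T) with hc
  have hc_mem : ∀ s, c s ∈ Icc (0:ℝ) T := fun s =>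
    ⟨le_max_left _ _, max_le hT1.le (min_le_right _ _)⟩
  have hc_eq : ∀ s ∈ Icc (0:ℝ) T, c s = s := fun s hs => by
    rw [hc]; simp only; rw [min_eq_left hs.2, max_eq_right hs.1]
  have hc_cont : Continuous c := continuous_const.max (continuous_id.min continuous_const)
  set f' : ℝ → Measure ℝ := fun s => f (c s) with hf'
  have hfin' : ∀ s, IsFiniteMeasure (f' s) := fun s => hfin _ (hc_mem s)
  -- measurability of f'
  have hcoe_cont : ∀ A : Set ℝ, MeasurableSet A →
      Continuous fun s => ((f' s) A).toReal := by
    intro A hA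
    have hb : ∀ x, |A.indicator (fun _ => (1:ℝ)) x| ≤ 1 := fun x => by
      by_cases hx : x ∈ A <;> simp [hx, Set.indicator_of_mem, Set.indicator_of_notMem]
    have h1 := MP.cont_integral hfin htv (A.indicator fun _ => (1:ℝ))
      (measurable_const.indicator hA) hb
    have h2 : ∀ s ∈ Icc (0:ℝ) T,
        (∫ x, A.indicator (fun _ => (1:ℝ)) x ∂(f s)) = ((f s) A).toReal := by
      intro s hs
      haveI := hfin s hs
      rw [MeasureTheory.integral_indicator_const (1:ℝ) hA]
      simp [Measure.real]
    have h3 : ContinuousOn (fun s => ((f s) A).toReal) (Icc 0 T) := h1.congr fun s hs => (h2 s hs).symm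
    exact h3.comp_continuous hc_cont hc_mem
  have hf'meas : Measurable f' := by
    apply Measure.measurable_of_measurable_coe
    intro A hA
    have heq : (fun s => f' s A) = fun s => ENNReal.ofReal (((f' s) A).toReal) := by
      funext s
      haveI := hfin' s
      rw [ENNReal.ofReal_toReal (measure_ne_top _ _)]
    rw [heq]
    exact ENNReal.measurable_ofReal.comp (hcoe_cont A hA).measurable
  -- mass bound
  obtain ⟨s₀, hs₀mem, hs₀⟩ := isCompact_Icc.exists_isMaxOn (nonempty_Icc.2 hT1.le)
    ((hcoe_cont Set.univ MeasurableSet.univ).continuousOn)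
  haveI := hfin' s₀
  set Bm : ℝ≥0∞ := f' s₀ Set.univ with hBm
  have hBmne : Bm ≠ ⊤ := measure_ne_top _ _
  have hmassbd : ∀ s, f' s Set.univ ≤ Bm := by
    intro s
    have h1 : ((f' s) Set.univ).toReal ≤ ((f' s₀) Set.univ).toReal := by
      have h0 := (isMaxOn_iff.1 hs₀) (c s) (hc_mem s)
      simp only [hf'] at h0 ⊢
      rwa [hc_eq (c s) (hc_mem s)] at h0
    haveI := hfin' s
    exact (ENNReal.toReal_le_toReal (measure_ne_top _ _) (measure_ne_top _ _)).1 h1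
  -- kernel measurability of inner integrals
  have hB0meas : Measurable fun s => B0 (f' s) := by
    have heq : (fun s => B0 (f' s)) = fun s =>
        Measure.map (fun p : ℝ × ℝ => (p.1 + p.2) / 2)
          (((f' s) Set.univ)⁻¹ • (f' s).prod (f' s)) := by
      funext s
      haveI := hfin' s
      exact MP.B0_eq _
    rw [heq]
    have hprod : Measurable fun s => (f' s).prod (f' s) := by
      let κ : Kernel ℝ ℝ := ⟨f', hf'meas⟩
      haveI : IsFiniteKernel κ := ⟨⟨Bm, hBmne.lt_top, fun s => hmassbd s⟩⟩
      have h := (κ ×ₖ κ).measurable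
      have h2 : ∀ s, (κ ×ₖ κ) s = (f' s).prod (f' s) := fun s => Kernel.prod_apply κ κ s
      simpa [funext h2] using h
    have hsmul : Measurable fun s => ((f' s) Set.univ)⁻¹ • (f' s).prod (f' s) := by
      apply Measure.measurable_of_measurable_coe
      intro A hA
      simp_rw [Measure.smul_apply, smul_eq_mul]
      exact (((Measure.measurable_coe MeasurableSet.univ).comp hf'meas).inv).mul
        ((Measure.measurable_coe hA).comp hprod)
    exact (Measure.measurable_map _ MP.measurable_half).comp hsmul
  have hinner : ∀ g : ℝ → ℝ≥0∞, Measurable g → ∀ t : ℝ,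
      Measurable fun s =>
        ∫⁻ x, g x * ENNReal.ofReal (Real.exp (-(m x) * (t - s))) ∂(B0 (f' s)) := by
    intro g hg t
    let η : Kernel ℝ ℝ := ⟨fun s => B0 (f' s), hB0meas⟩
    haveI : IsFiniteKernel η := ⟨⟨Bm, hBmne.lt_top, fun s => by
      haveI := hfin' s
      exact (MP.B0_mass (f' s)).trans (hmassbd s)⟩⟩
    have huncurry : Measurable (Function.uncurry fun (s : ℝ) (x : ℝ) =>
        g x * ENNReal.ofReal (Real.exp (-(m x) * (t - s)))) := by
      apply Measurable.mul
      · exact hg.comp measurable_snd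
      · apply ENNReal.measurable_ofReal.comp
        apply Real.measurable_exp.comp
        exact ((hm.comp measurable_snd).neg).mul (measurable_const.sub measurable_fst)
    exact Measurable.lintegral_kernel_prod_right (κ := η) huncurry
  have hE : ∀ τ : ℝ, Measurable fun x => ENNReal.ofReal (Real.exp (-(m x) * τ)) := fun τ =>
    ENNReal.measurable_ofReal.comp (Real.measurable_exp.comp (hm.neg.mul_const τ))
  -- Duhamel formula on sets, for f'
  have hDuh' : ∀ A : Set ℝ, MeasurableSet A → ∀ t ∈ Icc (0:ℝ) T,
      f' t A = (∫⁻ x in A, ENNReal.ofReal (Real.exp (-(m x) * t)) ∂f0)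
        + ∫⁻ s in Icc 0 t,
            ∫⁻ x in A, ENNReal.ofReal (Real.exp (-(m x) * (t - s))) ∂(B0 (f' s)) := by
    intro A hA t ht
    have h1 : f' t A = f t A := by rw [hf']; simp only; rw [hc_eq t ht]
    rw [h1, hDuh A hA t ht]
    congr 1
    apply setLIntegral_congr_fun measurableSet_Icc
    intro s hs
    have : f' s = f s := by rw [hf']; simp only; rw [hc_eq s ⟨hs.1, hs.2.trans ht.2⟩]
    simp only [this]
  -- Duhamel formula for nonnegative measurable integrands
  have hDuhF : ∀ g : ℝ → ℝ≥0∞, Measurable g → ∀ t ∈ Icc (0:ℝ) T,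
      ∫⁻ x, g x ∂(f' t) = (∫⁻ x, g x * ENNReal.ofReal (Real.exp (-(m x) * t)) ∂f0)
        + ∫⁻ s in Icc 0 t,
            ∫⁻ x, g x * ENNReal.ofReal (Real.exp (-(m x) * (t - s))) ∂(B0 (f' s)) := by
    intro g hg
    revert g
    apply Measurable.ennreal_induction (motive := fun g : ℝ → ℝ≥0∞ => ∀ t ∈ Icc (0:ℝ) T,
        ∫⁻ x, g x ∂(f' t) = (∫⁻ x, g x * ENNReal.ofReal (Real.exp (-(m x) * t)) ∂f0)
          + ∫⁻ s in Icc 0 t,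
              ∫⁻ x, g x * ENNReal.ofReal (Real.exp (-(m x) * (t - s))) ∂(B0 (f' s)))
    case indicator =>
      intro c' A hA
      intro t ht
      have hind : ∀ (c'' : ℝ≥0∞) (τ : ℝ) (μ : Measure ℝ),
          (∫⁻ x, A.indicator (fun _ => c'') x * ENNReal.ofReal (Real.exp (-(m x) * τ)) ∂μ)
            = c'' * ∫⁻ x in A, ENNReal.ofReal (Real.exp (-(m x) * τ)) ∂μ := by
        intro c'' τ μ
        rw [← lintegral_indicator hA, ← lintegral_const_mul c'' (Measurable.indicator (hE τ) hA)]
        congr 1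
        funext x
        by_cases hx : x ∈ A <;> simp [hx]
      have hsetmeas : Measurable fun s =>
          ∫⁻ x in A, ENNReal.ofReal (Real.exp (-(m x) * (t - s))) ∂(B0 (f' s)) := by
        have h1 := hinner (A.indicator fun _ => 1) (measurable_const.indicator hA) t
        have h2 : ∀ s, (∫⁻ x, A.indicator (fun _ => (1:ℝ≥0∞)) x
              * ENNReal.ofReal (Real.exp (-(m x) * (t - s))) ∂(B0 (f' s)))
            = ∫⁻ x in A, ENNReal.ofReal (Real.exp (-(m x) * (t - s))) ∂(B0 (f' s)) := by
          intro s
          rw [hind 1 (t - s)]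
          rw [one_mul]
        simpa only [h2] using h1
      calc ∫⁻ x, A.indicator (fun _ => c') x ∂(f' t) = c' * f' t A :=
            lintegral_indicator_const hA c'
        _ = c' * ((∫⁻ x in A, ENNReal.ofReal (Real.exp (-(m x) * t)) ∂f0)
            + ∫⁻ s in Icc 0 t,
                ∫⁻ x in A, ENNReal.ofReal (Real.exp (-(m x) * (t - s))) ∂(B0 (f' s))) := by
          rw [hDuh' A hA t ht]
        _ = (∫⁻ x, A.indicator (fun _ => c') x * ENNReal.ofReal (Real.exp (-(m x) * t)) ∂f0)
            + ∫⁻ s in Icc 0 t,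
                ∫⁻ x, A.indicator (fun _ => c') x
                  * ENNReal.ofReal (Real.exp (-(m x) * (t - s))) ∂(B0 (f' s)) := by
          rw [mul_add, hind c' t f0, ← lintegral_const_mul c' hsetmeas]
          congr 1
          apply lintegral_congr
          intro s
          rw [hind c' (t - s)]
    case add =>
      intro g₁ g₂ hdisj hg₁ hg₂ P₁ P₂
      intro t ht
      have hadd : ∀ τ : ℝ, ∀ μ : Measure ℝ,
          (∫⁻ x, (g₁ + g₂) x * ENNReal.ofReal (Real.exp (-(m x) * τ)) ∂μ)
            = (∫⁻ x, g₁ x * ENNReal.ofReal (Real.exp (-(m x) * τ)) ∂μ)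
              + ∫⁻ x, g₂ x * ENNReal.ofReal (Real.exp (-(m x) * τ)) ∂μ := by
        intro τ μ
        simp_rw [Pi.add_apply, add_mul]
        exact lintegral_add_left (hg₁.mul (hE τ)) _
      calc ∫⁻ x, (g₁ + g₂) x ∂(f' t)
          = (∫⁻ x, g₁ x ∂(f' t)) + ∫⁻ x, g₂ x ∂(f' t) := by
            simp_rw [Pi.add_apply]
            exact lintegral_add_left hg₁ _
        _ = ((∫⁻ x, g₁ x * ENNReal.ofReal (Real.exp (-(m x) * t)) ∂f0)
              + ∫⁻ s in Icc 0 t, ∫⁻ x, g₁ x * ENNReal.ofReal (Real.exp (-(m x) * (t - s)))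
                  ∂(B0 (f' s)))
            + ((∫⁻ x, g₂ x * ENNReal.ofReal (Real.exp (-(m x) * t)) ∂f0)
              + ∫⁻ s in Icc 0 t, ∫⁻ x, g₂ x * ENNReal.ofReal (Real.exp (-(m x) * (t - s)))
                  ∂(B0 (f' s))) := by rw [P₁ t ht, P₂ t ht]
        _ = (∫⁻ x, (g₁ + g₂) x * ENNReal.ofReal (Real.exp (-(m x) * t)) ∂f0)
            + ∫⁻ s in Icc 0 t, ∫⁻ x, (g₁ + g₂) x * ENNReal.ofReal (Real.exp (-(m x) * (t - s)))
                ∂(B0 (f' s)) := by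
          rw [hadd t f0]
          have : ∫⁻ s in Icc 0 t, ∫⁻ x, (g₁ + g₂) x
                * ENNReal.ofReal (Real.exp (-(m x) * (t - s))) ∂(B0 (f' s))
              = (∫⁻ s in Icc 0 t, ∫⁻ x, g₁ x * ENNReal.ofReal (Real.exp (-(m x) * (t - s)))
                  ∂(B0 (f' s)))
                + ∫⁻ s in Icc 0 t, ∫⁻ x, g₂ x * ENNReal.ofReal (Real.exp (-(m x) * (t - s)))
                  ∂(B0 (f' s)) := by
            rw [← lintegral_add_left (hinner g₁ hg₁ t)]
            apply lintegral_congr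
            intro s
            exact hadd (t - s) _
          rw [this]
          ring
    case iSup =>
      intro gs hgs hmono Pn
      intro t ht
      have hmono' : ∀ τ : ℝ, Monotone fun (n : ℕ) (x : ℝ) =>
          gs n x * ENNReal.ofReal (Real.exp (-(m x) * τ)) :=
        fun τ i j hij x => mul_le_mul_left (hmono hij x) _
      have hsup : ∀ τ : ℝ, ∀ μ : Measure ℝ,
          (∫⁻ x, (fun x => ⨆ n, gs n x) x * ENNReal.ofReal (Real.exp (-(m x) * τ)) ∂μ)
            = ⨆ n, ∫⁻ x, gs n x * ENNReal.ofReal (Real.exp (-(m x) * τ)) ∂μ := by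
        intro τ μ
        simp_rw [ENNReal.iSup_mul]
        exact lintegral_iSup (fun n => (hgs n).mul (hE τ)) (fun i j hij x => (hmono' τ) hij x)
      calc ∫⁻ x, (fun x => ⨆ n, gs n x) x ∂(f' t) = ⨆ n, ∫⁻ x, gs n x ∂(f' t) :=
            lintegral_iSup hgs hmono
        _ = ⨆ n, ((∫⁻ x, gs n x * ENNReal.ofReal (Real.exp (-(m x) * t)) ∂f0)
            + ∫⁻ s in Icc 0 t, ∫⁻ x, gs n x * ENNReal.ofReal (Real.exp (-(m x) * (t - s)))
                ∂(B0 (f' s))) := by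
            exact iSup_congr fun n => Pn n t ht
        _ = (⨆ n, ∫⁻ x, gs n x * ENNReal.ofReal (Real.exp (-(m x) * t)) ∂f0)
            + ⨆ n, ∫⁻ s in Icc 0 t, ∫⁻ x, gs n x * ENNReal.ofReal (Real.exp (-(m x) * (t - s)))
                ∂(B0 (f' s)) := by
            have hm1 : Monotone fun n : ℕ =>
                ∫⁻ x, gs n x * ENNReal.ofReal (Real.exp (-(m x) * t)) ∂f0 :=
              fun i j hij => lintegral_mono fun x => (hmono' t) hij x
            have hm2 : Monotone fun n : ℕ =>
                ∫⁻ s in Icc 0 t, ∫⁻ x, gs n x * ENNReal.ofReal (Real.exp (-(m x) * (t - s)))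
                  ∂(B0 (f' s)) :=
              fun i j hij => lintegral_mono fun s => lintegral_mono fun x =>
                (hmono' (t - s)) hij x
            exact (ENNReal.iSup_add_iSup_of_monotone hm1 hm2).symm
        _ = (∫⁻ x, (fun x => ⨆ n, gs n x) x * ENNReal.ofReal (Real.exp (-(m x) * t)) ∂f0)
            + ∫⁻ s in Icc 0 t, ∫⁻ x, (fun x => ⨆ n, gs n x) x
                * ENNReal.ofReal (Real.exp (-(m x) * (t - s))) ∂(B0 (f' s)) := by
            rw [hsup t f0]
            congr 1
            rw [← lintegral_iSup (fun n => hinner (gs n) (hgs n) t)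
              (fun i j hij s => lintegral_mono fun x => (hmono' (t - s)) hij x)]
            apply lintegral_congr
            intro s
            exact (hsup (t - s) _).symm
  -- exponential bound on the semigroup weight
  have hE_le : ∀ (x : ℝ) (τ : ℝ), 0 ≤ τ →
      ENNReal.ofReal (Real.exp (-(m x) * τ)) ≤ ENNReal.ofReal (Real.exp (K * τ)) := by
    intro x τ hτ
    apply ENNReal.ofReal_le_ofReal
    apply Real.exp_le_exp.2
    have : -(m x) ≤ K := neg_le.mp (hbd x)
    exact mul_le_mul_of_nonneg_right this hτ
  -- the integral recurrence
  have hrec_gen : ∀ (g : ℝ → ℝ≥0∞), Measurable g → ∀ (L : ℝ) (C : ℝ≥0∞),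
      2 * C = ENNReal.ofReal L →
      (∀ a b : ℝ, g ((a + b) / 2) ≤ C * (g a + g b)) →
      ∀ t ∈ Icc (0:ℝ) T, (∫⁻ x, g x ∂(f' t)) ≤
        ENNReal.ofReal (Real.exp (K * t)) * (∫⁻ x, g x ∂f0)
          + ENNReal.ofReal L * ∫⁻ s in Icc 0 t,
              ENNReal.ofReal (Real.exp (K * (t - s))) * ∫⁻ x, g x ∂(f' s) := by
    intro g hg L C hLC hpt t ht
    have hψmeas : Measurable fun s => ∫⁻ x, g x ∂(f' s) :=
      (Measure.measurable_lintegral hg).comp hf'meas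
    rw [hDuhF g hg t ht]
    apply add_le_add
    · calc ∫⁻ x, g x * ENNReal.ofReal (Real.exp (-(m x) * t)) ∂f0
          ≤ ∫⁻ x, g x * ENNReal.ofReal (Real.exp (K * t)) ∂f0 :=
            lintegral_mono fun x => mul_le_mul_right (hE_le x t ht.1) _
        _ = ENNReal.ofReal (Real.exp (K * t)) * ∫⁻ x, g x ∂f0 := by
            rw [lintegral_mul_const _ hg, mul_comm]
    · have hpt' : ∀ s ∈ Icc (0:ℝ) t,
          (∫⁻ x, g x * ENNReal.ofReal (Real.exp (-(m x) * (t - s))) ∂(B0 (f' s)))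
            ≤ ENNReal.ofReal L * (ENNReal.ofReal (Real.exp (K * (t - s)))
                * ∫⁻ x, g x ∂(f' s)) := by
        intro s hs
        haveI := hfin' s
        calc (∫⁻ x, g x * ENNReal.ofReal (Real.exp (-(m x) * (t - s))) ∂(B0 (f' s)))
            ≤ ∫⁻ x, g x * ENNReal.ofReal (Real.exp (K * (t - s))) ∂(B0 (f' s)) :=
              lintegral_mono fun x => mul_le_mul_right (hE_le x (t - s) (by linarith [hs.2])) _
          _ = ENNReal.ofReal (Real.exp (K * (t - s))) * ∫⁻ x, g x ∂(B0 (f' s)) := by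
              rw [lintegral_mul_const _ hg, mul_comm]
          _ ≤ ENNReal.ofReal (Real.exp (K * (t - s))) * (2 * C * ∫⁻ x, g x ∂(f' s)) :=
              mul_le_mul_right (MP.B0_lintegral_le (f' s) g hg C hpt) _
          _ = ENNReal.ofReal L * (ENNReal.ofReal (Real.exp (K * (t - s)))
                * ∫⁻ x, g x ∂(f' s)) := by rw [hLC]; ring
      have hbdmeas : Measurable fun s => ENNReal.ofReal L
          * (ENNReal.ofReal (Real.exp (K * (t - s))) * ∫⁻ x, g x ∂(f' s)) := by
        apply measurable_const.mul
        apply Measurable.mul _ hψmeas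
        exact ENNReal.measurable_ofReal.comp
          (Real.measurable_exp.comp (measurable_const.sub measurable_id |>.const_mul K))
      calc ∫⁻ s in Icc 0 t, ∫⁻ x, g x * ENNReal.ofReal (Real.exp (-(m x) * (t - s)))
              ∂(B0 (f' s))
          ≤ ∫⁻ s in Icc 0 t, ENNReal.ofReal L
              * (ENNReal.ofReal (Real.exp (K * (t - s))) * ∫⁻ x, g x ∂(f' s)) :=
            setLIntegral_mono hbdmeas hpt'
        _ = ENNReal.ofReal L * ∫⁻ s in Icc 0 t,
              ENNReal.ofReal (Real.exp (K * (t - s))) * ∫⁻ x, g x ∂(f' s) :=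
            lintegral_const_mul' _ _ ENNReal.ofReal_ne_top
  -- truncated moments
  set F : ℝ → ℝ≥0∞ := fun x => ENNReal.ofReal (|x| ^ k) with hF
  have hFmeas : Measurable F := by
    apply ENNReal.measurable_ofReal.comp
    exact (measurable_id.abs.pow_const k)
  set g : ℕ → ℝ → ℝ≥0∞ := fun n x => ENNReal.ofReal (min |x| ((n:ℝ) + 1) ^ k) with hg
  have hgmeas : ∀ n, Measurable (g n) := by
    intro n
    apply ENNReal.measurable_ofReal.comp
    exact ((measurable_id.abs.min measurable_const).pow_const k)
  have hgmono : Monotone g := by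
    intro i j hij x
    apply ENNReal.ofReal_le_ofReal
    apply pow_le_pow_left₀ (le_min (abs_nonneg _) (by positivity))
    exact min_le_min le_rfl (by exact_mod_cast add_le_add_left (Nat.cast_le.2 hij) 1)
  have hg_le_F : ∀ n x, g n x ≤ F x := fun n x =>
    ENNReal.ofReal_le_ofReal (pow_le_pow_left₀ (le_min (abs_nonneg _) (by positivity))
      (min_le_left _ _) k)
  have hsup_pt : ∀ x : ℝ, (⨆ n, g n x) = F x := by
    intro x
    apply le_antisymm
    · exact iSup_le fun n => hg_le_F n x
    · obtain ⟨n, hn⟩ := exists_nat_ge |x|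
      have : g n x = F x := by
        rw [hg, hF]
        simp only
        rw [min_eq_left (by linarith)]
      rw [← this]
      exact le_iSup (fun n => g n x) n
  set M0 : ℝ≥0∞ := ∫⁻ x, F x ∂f0 with hM0
  -- stage 1: uniform bound on truncated moments
  have hψn_meas : ∀ n, Measurable fun s => ∫⁻ x, g n x ∂(f' s) := fun n =>
    (Measure.measurable_lintegral (hgmeas n)).comp hf'meas
  have stage1 : ∀ n : ℕ, ∀ s ∈ Icc (0:ℝ) T, (∫⁻ x, g n x ∂(f' s))
      ≤ ENNReal.ofReal (Real.exp ((K + 2) * s)) * ∫⁻ x, g n x ∂f0 := by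
    intro n
    have hpt_n : ∀ a b : ℝ, g n ((a + b) / 2) ≤ 1 * (g n a + g n b) := by
      intro a b
      rw [one_mul]
      calc g n ((a + b) / 2)
          ≤ ENNReal.ofReal (min |a| ((n:ℝ) + 1) ^ k + min |b| ((n:ℝ) + 1) ^ k) :=
            ENNReal.ofReal_le_ofReal (MP.pt_trunc k ((n:ℝ) + 1) a b (by positivity))
        _ ≤ g n a + g n b := ENNReal.ofReal_add_le
    have hLC : (2 : ℝ≥0∞) * 1 = ENNReal.ofReal 2 := by
      rw [mul_one]
      simp
    have hub : ∀ s ∈ Icc (0:ℝ) T, (∫⁻ x, g n x ∂(f' s))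
        ≤ ENNReal.ofReal (((n:ℝ) + 1) ^ k) * Bm := by
      intro s hs
      calc (∫⁻ x, g n x ∂(f' s)) ≤ ∫⁻ _, ENNReal.ofReal (((n:ℝ) + 1) ^ k) ∂(f' s) :=
            lintegral_mono fun x => ENNReal.ofReal_le_ofReal
              (pow_le_pow_left₀ (le_min (abs_nonneg _) (by positivity)) (min_le_right _ _) k)
        _ = ENNReal.ofReal (((n:ℝ) + 1) ^ k) * f' s Set.univ := lintegral_const _
        _ ≤ ENNReal.ofReal (((n:ℝ) + 1) ^ k) * Bm := mul_le_mul_right (hmassbd s) _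
    exact MP.gronwall_exp K 2 T hK two_pos hT1.le _ (hψn_meas n)
      (ENNReal.ofReal (((n:ℝ) + 1) ^ k) * Bm) _
      (ENNReal.mul_ne_top ENNReal.ofReal_ne_top hBmne) hub
      (hrec_gen (g n) (hgmeas n) 2 1 hLC hpt_n)
  -- the full moment as a supremum
  set M : ℝ → ℝ≥0∞ := fun s => ∫⁻ x, F x ∂(f' s) with hM
  have hMeq : ∀ s, M s = ⨆ n, ∫⁻ x, g n x ∂(f' s) := by
    intro s
    rw [hM]
    simp only
    rw [← lintegral_iSup hgmeas hgmono]
    exact lintegral_congr fun x => (hsup_pt x).symm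
  have hMmeas : Measurable M := (Measure.measurable_lintegral hFmeas).comp hf'meas
  have hg0_le : ∀ n, (∫⁻ x, g n x ∂f0) ≤ M0 := fun n => lintegral_mono fun x => hg_le_F n x
  have hMub : ∀ s ∈ Icc (0:ℝ) T, M s ≤ ENNReal.ofReal (Real.exp ((K + 2) * T)) * M0 := by
    intro s hs
    rw [hMeq s]
    apply iSup_le
    intro n
    calc (∫⁻ x, g n x ∂(f' s)) ≤ ENNReal.ofReal (Real.exp ((K + 2) * s)) * ∫⁻ x, g n x ∂f0 :=
          stage1 n s hs
      _ ≤ ENNReal.ofReal (Real.exp ((K + 2) * T)) * M0 :=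
        mul_le_mul' (ENNReal.ofReal_le_ofReal (Real.exp_le_exp.2
          (mul_le_mul_of_nonneg_left hs.2 (by linarith)))) (hg0_le n)
  -- stage 2: sharp Gronwall for the full moment
  have hptF : ∀ a b : ℝ, F ((a + b) / 2) ≤ 2⁻¹ * (F a + F b) := by
    intro a b
    calc F ((a + b) / 2) ≤ ENNReal.ofReal ((|a| ^ k + |b| ^ k) / 2) :=
          ENNReal.ofReal_le_ofReal (MP.pt_conv k a b)
      _ = ENNReal.ofReal (|a| ^ k + |b| ^ k) / 2 := by
          rw [ENNReal.ofReal_div_of_pos two_pos]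
          norm_num
      _ ≤ (F a + F b) / 2 := by
          apply ENNReal.div_le_div_right
          exact ENNReal.ofReal_add_le
      _ = 2⁻¹ * (F a + F b) := by
          rw [div_eq_mul_inv, mul_comm]
  have hLC1 : (2 : ℝ≥0∞) * 2⁻¹ = ENNReal.ofReal 1 := by
    rw [ENNReal.mul_inv_cancel two_ne_zero ofNat_ne_top, ENNReal.ofReal_one]
  have hMrec : ∀ t ∈ Icc (0:ℝ) T, M t ≤ ENNReal.ofReal (Real.exp (K * t)) * M0
      + ENNReal.ofReal 1 * ∫⁻ s in Icc 0 t, ENNReal.ofReal (Real.exp (K * (t - s))) * M s :=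
    fun t ht => hrec_gen F hFmeas 1 2⁻¹ hLC1 hptF t ht
  have final := MP.gronwall_exp K 1 T hK one_pos hT1.le M hMmeas
    (ENNReal.ofReal (Real.exp ((K + 2) * T)) * M0) M0
    (ENNReal.mul_ne_top ENNReal.ofReal_ne_top hmom.ne) hMub hMrec t0 ht0T
  have hft0 : f' t0 = f t0 := by rw [hf']; simp only; rw [hc_eq t0 ht0T]
  calc (∫⁻ x, ENNReal.ofReal (|x| ^ k) ∂(f t0)) = M t0 := by
        rw [hM]
        simp only [hF]
        rw [hft0]
    _ ≤ ENNReal.ofReal (Real.exp ((K + 1) * t0)) * M0 := final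
    _ = ENNReal.ofReal (Real.exp ((K + 1) * t0)) * ∫⁻ x, ENNReal.ofReal (|x| ^ k) ∂f0 := rfl
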